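/- Let X be a real vector space of dimension at least 2 endowed with two norms ‖·‖₁ and ‖·‖₂. The following are equivalent: (i) for every x ∈ X, {y : x ⊥_{ρ*} y with respect to ‖·‖₁} = {y : x ⊥_{ρ*} y with respect to ‖·‖₂}; (ii) for every x ∈ X, {y : x ⊥_B y with respect to ‖·‖₁} = {y : x ⊥_B y with respect to ‖·‖₂}. Moreover, each is equivalent to the existence of M > 0 with ‖x‖₂ = M·‖x‖₁ for all x ∈ X. -/

import Mathlib

open Filter Topology

/-- `N : X → ℝ` is a norm on the real vector space `X`. -/
def IsNorm {X : Type*} [AddCommGroup X] [Module ℝ X] (N : X → ℝ) : Prop :=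
  (∀ x : X, N x = 0 ↔ x = 0) ∧
  (∀ (t : ℝ) (x : X), N (t • x) = |t| * N x) ∧
  (∀ x y : X, N (x + y) ≤ N x + N y)

/-- The norm derivative `ρ₊` computed with respect to the norm `N`. -/
noncomputable def rhoPlusN {X : Type*} [AddCommGroup X] [Module ℝ X] (N : X → ℝ)
    (x y : X) : ℝ :=
  limUnder (𝓝[>] (0 : ℝ)) (fun t : ℝ => (N (x + t • y) ^ 2 - N x ^ 2) / (2 * t))

/-- The norm derivative `ρ₋` computed with respect to the norm `N`. -/
noncomputable def rhoMinusN {X : Type*} [AddCommGroup X] [Module ℝ X] (N : X → ℝ)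
    (x y : X) : ℝ :=
  limUnder (𝓝[<] (0 : ℝ)) (fun t : ℝ => (N (x + t • y) ^ 2 - N x ^ 2) / (2 * t))

/-- `ρ*` computed with respect to the norm `N`. -/
noncomputable def rhoStarN {X : Type*} [AddCommGroup X] [Module ℝ X] (N : X → ℝ)
    (x y : X) : ℝ :=
  rhoMinusN N x y * rhoPlusN N x y

open Set

section Aux

variable {X : Type*} [AddCommGroup X] [Module ℝ X] {N : X → ℝ}

lemma IsNorm.zero (h : IsNorm N) : N 0 = 0 := (h.1 0).mpr rfl

lemma IsNorm.neg' (h : IsNorm N) (x : X) : N (-x) = N x := by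
  have := h.2.1 (-1) x; simpa using this

lemma IsNorm.nonneg (h : IsNorm N) (x : X) : 0 ≤ N x := by
  have h0 : N (x + -x) ≤ N x + N (-x) := h.2.2 x (-x)
  rw [add_neg_cancel, h.zero, h.neg' x] at h0; linarith

lemma IsNorm.convexLine (h : IsNorm N) (x y : X) :
    ConvexOn ℝ univ (fun t : ℝ => N (x + t • y)) := by
  refine ⟨convex_univ, fun a _ b _ p q hp hq hpq => ?_⟩
  have key : p • (x + a • y) + q • (x + b • y) = (p + q) • x + (p * a + q * b) • y := by
    module
  rw [hpq, one_smul] at key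
  calc N (x + (p • a + q • b) • y) = N (p • (x + a • y) + q • (x + b • y)) := by
        rw [key]; norm_num
    _ ≤ N (p • (x + a • y)) + N (q • (x + b • y)) := h.2.2 _ _
    _ = p • N (x + a • y) + q • N (x + b • y) := by
        rw [h.2.1, h.2.1, abs_of_nonneg hp, abs_of_nonneg hq]; rfl

lemma IsNorm.convexSq (h : IsNorm N) (x y : X) :
    ConvexOn ℝ univ (fun t : ℝ => N (x + t • y) ^ 2) := by
  have hc := h.convexLine x y
  have := hc.mul hc (fun t _ => h.nonneg _) (fun t _ => h.nonneg _)
    (monovaryOn_self _ _)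
  rw [show (fun t : ℝ => N (x + t • y) ^ 2) = (fun t => N (x + t • y)) * (fun t => N (x + t • y)) by
    ext t; simp [sq]]
  exact this

/-- The difference quotient. -/
noncomputable def qfun (N : X → ℝ) (x y : X) (t : ℝ) : ℝ :=
  (N (x + t • y) ^ 2 - N x ^ 2) / (2 * t)

lemma rhoPlusN_def (x y : X) : rhoPlusN N x y = limUnder (𝓝[>] (0:ℝ)) (qfun N x y) := rfl
lemma rhoMinusN_def (x y : X) : rhoMinusN N x y = limUnder (𝓝[<] (0:ℝ)) (qfun N x y) := rfl

lemma qfun_mono (h : IsNorm N) (x y : X) {s t : ℝ} (hs : s ≠ 0) (ht : t ≠ 0)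
    (hst : s ≤ t) : qfun N x y s ≤ qfun N x y t := by
  have hsec := (h.convexSq x y).secant_mono (mem_univ (0:ℝ)) (mem_univ s) (mem_univ t) hs ht hst
  simp only [sub_zero] at hsec
  have h0 : N (x + (0:ℝ) • y) ^ 2 = N x ^ 2 := by norm_num
  rw [h0] at hsec
  unfold qfun
  rw [show (2:ℝ)*s = s*2 by ring, show (2:ℝ)*t = t*2 by ring, ← div_div, ← div_div]
  linarith

lemma tendsto_rhoPlus (h : IsNorm N) (x y : X) :
    Tendsto (qfun N x y) (𝓝[>] 0) (𝓝 (rhoPlusN N x y)) := by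
  have hm : MonotoneOn (qfun N x y) (Ioi 0) := fun s hs t ht hst =>
    qfun_mono h x y (ne_of_gt hs) (ne_of_gt ht) hst
  have hbdd : BddBelow (qfun N x y '' Ioi 0) := by
    refine ⟨qfun N x y (-1), ?_⟩
    rintro z ⟨t, ht, rfl⟩
    exact qfun_mono h x y (by norm_num) (ne_of_gt ht) (by simp at ht ⊢; linarith)
  have ht := hm.tendsto_nhdsGT hbdd
  rwa [rhoPlusN_def, ht.limUnder_eq]

lemma rhoPlus_le_qfun (h : IsNorm N) (x y : X) {t : ℝ} (ht : 0 < t) :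
    rhoPlusN N x y ≤ qfun N x y t := by
  refine le_of_tendsto (tendsto_rhoPlus h x y) ?_
  filter_upwards [Ioo_mem_nhdsGT_of_mem (by constructor <;> [rfl; exact ht] : (0:ℝ) ∈ Ico 0 t)]
    with s hs
  exact qfun_mono h x y (ne_of_gt hs.1) (ne_of_gt ht) hs.2.le

lemma tendsto_rhoMinus (h : IsNorm N) (x y : X) :
    Tendsto (qfun N x y) (𝓝[<] 0) (𝓝 (rhoMinusN N x y)) := by
  have hm : MonotoneOn (qfun N x y) (Iio 0) := fun s hs t ht hst =>
    qfun_mono h x y (ne_of_lt hs) (ne_of_lt ht) hst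
  have hbdd : BddAbove (qfun N x y '' Iio 0) := by
    refine ⟨qfun N x y 1, ?_⟩
    rintro z ⟨t, ht, rfl⟩
    exact qfun_mono h x y (ne_of_lt ht) (by norm_num) (by simp at ht ⊢; linarith)
  have ht := hm.tendsto_nhdsLT hbdd
  rwa [rhoMinusN_def, ht.limUnder_eq]

lemma qfun_le_rhoMinus (h : IsNorm N) (x y : X) {t : ℝ} (ht : t < 0) :
    qfun N x y t ≤ rhoMinusN N x y := by
  refine ge_of_tendsto (tendsto_rhoMinus h x y) ?_
  filter_upwards [Ioo_mem_nhdsLT_of_mem (by constructor <;> [exact ht; rfl] : (0:ℝ) ∈ Ioc t 0)]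
    with s hs
  exact qfun_mono h x y (ne_of_lt ht) (ne_of_lt hs.2) hs.1.le

lemma rhoMinus_le_rhoPlus (h : IsNorm N) (x y : X) :
    rhoMinusN N x y ≤ rhoPlusN N x y := by
  have h1 : ∀ s < (0:ℝ), qfun N x y s ≤ rhoPlusN N x y := by
    intro s hs
    refine ge_of_tendsto (tendsto_rhoPlus h x y) ?_
    filter_upwards [self_mem_nhdsWithin] with t ht
    exact qfun_mono h x y (ne_of_lt hs) (ne_of_gt ht) (by linarith [mem_Ioi.mp ht])
  refine le_of_tendsto (tendsto_rhoMinus h x y) ?_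
  filter_upwards [self_mem_nhdsWithin] with t ht
  exact h1 t ht

/-- Birkhoff–James orthogonality characterization. -/
lemma bj_iff (h : IsNorm N) (x y : X) :
    (∀ lam : ℝ, N x ≤ N (x + lam • y)) ↔
      (rhoMinusN N x y ≤ 0 ∧ 0 ≤ rhoPlusN N x y) := by
  constructor
  · intro hbj
    constructor
    · refine le_of_tendsto (tendsto_rhoMinus h x y) ?_
      filter_upwards [self_mem_nhdsWithin] with t ht
      have h1 : N x ^ 2 ≤ N (x + t • y) ^ 2 :=
        pow_le_pow_left₀ (h.nonneg x) (hbj t) 2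
      have ht' : t < 0 := ht
      exact div_nonpos_of_nonneg_of_nonpos (by linarith) (by linarith)
    · refine ge_of_tendsto (tendsto_rhoPlus h x y) ?_
      filter_upwards [self_mem_nhdsWithin] with t ht
      have h1 : N x ^ 2 ≤ N (x + t • y) ^ 2 :=
        pow_le_pow_left₀ (h.nonneg x) (hbj t) 2
      have ht' : 0 < t := ht
      exact div_nonneg (by linarith) (by linarith)
  · rintro ⟨hm, hp⟩ lam
    have key : N x ^ 2 ≤ N (x + lam • y) ^ 2 := by
      rcases lt_trichotomy lam 0 with hl | rfl | hl
      · have h1 := qfun_le_rhoMinus h x y hl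
        have h2 : qfun N x y lam * (2 * lam) = N (x + lam • y) ^ 2 - N x ^ 2 :=
          div_mul_cancel₀ _ (by linarith)
        nlinarith
      · simp
      · have h1 := rhoPlus_le_qfun h x y hl
        have h2 : qfun N x y lam * (2 * lam) = N (x + lam • y) ^ 2 - N x ^ 2 :=
          div_mul_cancel₀ _ (by positivity)
        nlinarith
    nlinarith [h.nonneg (x + lam • y), h.nonneg x]

/-- Translation lemma for `ρ₊`. -/
lemma rhoPlus_translate (h : IsNorm N) (x y : X) (s : ℝ) :
    rhoPlusN N x (y + s • x) = rhoPlusN N x y + s * N x ^ 2 := by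
  have hden : Tendsto (fun t : ℝ => 1 + t * s) (𝓝[>] 0) (𝓝 1) := by
    have : ContinuousAt (fun t : ℝ => 1 + t * s) 0 := by fun_prop
    have h0 := this.tendsto.mono_left (nhdsWithin_le_nhds (s := Ioi (0:ℝ)))
    simpa using h0
  have hev : ∀ᶠ t in 𝓝[>] (0:ℝ), 0 < 1 + t * s :=
    hden.eventually (eventually_gt_nhds one_pos)
  have htau : Tendsto (fun t : ℝ => t / (1 + t * s)) (𝓝[>] 0) (𝓝[>] 0) := by
    rw [tendsto_nhdsWithin_iff]
    constructor
    · have hc : ContinuousAt (fun t : ℝ => t / (1 + t * s)) 0 :=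
        continuousAt_id.div (by fun_prop) (by norm_num)
      have h0 := hc.tendsto.mono_left (nhdsWithin_le_nhds (s := Ioi (0:ℝ)))
      simpa using h0
    · filter_upwards [hev, self_mem_nhdsWithin] with t h1 h2
      exact div_pos h2 h1
  have hG : Tendsto
      (fun t : ℝ => (1 + t * s) * qfun N x y (t / (1 + t * s)) + (s + t * s ^ 2 / 2) * N x ^ 2)
      (𝓝[>] 0) (𝓝 (1 * rhoPlusN N x y + s * N x ^ 2)) := by
    refine Tendsto.add (Tendsto.mul hden ((tendsto_rhoPlus h x y).comp htau)) ?_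
    have : Tendsto (fun t : ℝ => s + t * s ^ 2 / 2) (𝓝[>] 0) (𝓝 s) := by
      have : ContinuousAt (fun t : ℝ => s + t * s ^ 2 / 2) 0 := by fun_prop
      have h0 := this.tendsto.mono_left (nhdsWithin_le_nhds (s := Ioi (0:ℝ)))
      simpa using h0
    exact this.mul_const _
  rw [one_mul] at hG
  have heq : ∀ᶠ t in 𝓝[>] (0:ℝ),
      (fun t : ℝ => (1 + t * s) * qfun N x y (t / (1 + t * s)) + (s + t * s ^ 2 / 2) * N x ^ 2) t
        = qfun N x (y + s • x) t := by
    filter_upwards [hev, self_mem_nhdsWithin] with t h1 h2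
    have ht : (0:ℝ) < t := h2
    have hne : (1 + t * s) ≠ 0 := ne_of_gt h1
    have e1 : (1 + t * s) • (x + (t / (1 + t * s)) • y) = x + t • (y + s • x) := by
      rw [smul_add, smul_smul, mul_div_cancel₀ _ hne]
      module
    have e2 : N (x + t • (y + s • x)) = (1 + t * s) * N (x + (t / (1 + t * s)) • y) := by
      rw [← e1, h.2.1, abs_of_pos h1]
    unfold qfun
    rw [e2, mul_pow]
    field_simp
    ring
  rw [rhoPlusN_def]
  exact (hG.congr' heq).limUnder_eq

lemma rhoMinus_eq_neg (h : IsNorm N) (x y : X) :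
    rhoMinusN N x y = - rhoPlusN N x (-y) := by
  have hneg : Tendsto (fun t : ℝ => -t) (𝓝[<] (0:ℝ)) (𝓝[>] 0) := by
    rw [tendsto_nhdsWithin_iff]
    refine ⟨?_, ?_⟩
    · have h0 := (continuous_neg.tendsto (0:ℝ)).mono_left (nhdsWithin_le_nhds (s := Iio (0:ℝ)))
      simpa using h0
    · filter_upwards [self_mem_nhdsWithin] with t ht
      simpa using ht
  have hT : Tendsto (fun t : ℝ => - qfun N x (-y) (-t)) (𝓝[<] 0)
      (𝓝 (- rhoPlusN N x (-y))) := ((tendsto_rhoPlus h x (-y)).comp hneg).neg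
  have heq : ∀ᶠ t in 𝓝[<] (0:ℝ), - qfun N x (-y) (-t) = qfun N x y t := by
    filter_upwards [self_mem_nhdsWithin] with t ht
    have ht' : t < 0 := ht
    unfold qfun
    rw [show (-t) • (-y) = t • y by module]
    field_simp
  rw [rhoMinusN_def]
  exact (hT.congr' heq).limUnder_eq

lemma rhoMinus_translate (h : IsNorm N) (x y : X) (s : ℝ) :
    rhoMinusN N x (y + s • x) = rhoMinusN N x y + s * N x ^ 2 := by
  rw [rhoMinus_eq_neg h, rhoMinus_eq_neg h,
    show -(y + s • x) = -y + (-s) • x by module, rhoPlus_translate h x (-y) (-s)]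
  ring

lemma norm_pos (h : IsNorm N) {x : X} (hx : x ≠ 0) : 0 < N x :=
  lt_of_le_of_ne (h.nonneg x) (fun hc => hx ((h.1 x).mp hc.symm))

/-- BJ orthogonality expressed via the ρ* zero set. -/
lemma bj_via_star (h : IsNorm N) {x : X} (hx : x ≠ 0) (y : X) :
    (rhoMinusN N x y ≤ 0 ∧ 0 ≤ rhoPlusN N x y) ↔
      ((∃ t : ℝ, 0 ≤ t ∧ rhoStarN N x (y + t • x) = 0) ∧
       (∃ t : ℝ, t ≤ 0 ∧ rhoStarN N x (y + t • x) = 0)) := by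
  have hc : 0 < N x ^ 2 := pow_pos (norm_pos h hx) 2
  set a := rhoMinusN N x y with ha
  set b := rhoPlusN N x y with hb
  have hab : a ≤ b := rhoMinus_le_rhoPlus h x y
  have hstar : ∀ t : ℝ, rhoStarN N x (y + t • x) = (a + t * N x ^ 2) * (b + t * N x ^ 2) := by
    intro t
    rw [rhoStarN, rhoPlus_translate h x y t, rhoMinus_translate h x y t]
  constructor
  · rintro ⟨h1, h2⟩
    refine ⟨⟨-a / N x ^ 2, div_nonneg (by linarith) hc.le, ?_⟩,
      ⟨-b / N x ^ 2, div_nonpos_of_nonpos_of_nonneg (by linarith) hc.le, ?_⟩⟩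
    · rw [hstar]
      have : a + (-a / N x ^ 2) * N x ^ 2 = 0 := by rw [div_mul_cancel₀ _ hc.ne']; ring
      rw [this, zero_mul]
    · rw [hstar]
      have : b + (-b / N x ^ 2) * N x ^ 2 = 0 := by rw [div_mul_cancel₀ _ hc.ne']; ring
      rw [this, mul_zero]
  · rintro ⟨⟨t1, ht1, he1⟩, ⟨t2, ht2, he2⟩⟩
    rw [hstar] at he1 he2
    constructor
    · rcases mul_eq_zero.mp he1 with h' | h' <;> nlinarith
    · rcases mul_eq_zero.mp he2 with h' | h' <;> nlinarith

/-- Interval endpoint comparison helper. -/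
lemma endpoint_le {a b a' b' c c' : ℝ} (hc : 0 < c) (hab : a ≤ b)
    (key : ∀ s : ℝ, (a + s * c ≤ 0 ∧ 0 ≤ b + s * c) → (a' + s * c' ≤ 0 ∧ 0 ≤ b' + s * c')) :
    b * c' ≤ b' * c ∧ a' * c ≤ a * c' := by
  have e1 : (-b / c) * c = -b := div_mul_cancel₀ _ hc.ne'
  have e2 : (-a / c) * c = -a := div_mul_cancel₀ _ hc.ne'
  obtain ⟨_, h2⟩ := key (-b / c) ⟨by rw [e1]; linarith, by rw [e1]; linarith⟩
  obtain ⟨h3, _⟩ := key (-a / c) ⟨by rw [e2]; linarith, by rw [e2]; linarith⟩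
  constructor
  · have e3 : (-b / c) * c' = -(b * c' / c) := by ring
    rw [e3] at h2
    have : b * c' / c ≤ b' := by linarith
    exact (div_le_iff₀ hc).mp this
  · have e4 : (-a / c) * c' = -(a * c' / c) := by ring
    rw [e4] at h3
    have : a' ≤ a * c' / c := by linarith
    exact (le_div_iff₀ hc).mp this

/-- From equality of BJ sets, normalized ρ equalities. -/
lemma ratio_eq {N₁ N₂ : X → ℝ} (h₁ : IsNorm N₁) (h₂ : IsNorm N₂)
    (hbj : ∀ x : X, {y : X | ∀ lam : ℝ, N₁ x ≤ N₁ (x + lam • y)} =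
                 {y : X | ∀ lam : ℝ, N₂ x ≤ N₂ (x + lam • y)})
    {x : X} (hx : x ≠ 0) (v : X) :
    rhoPlusN N₂ x v * N₁ x ^ 2 = rhoPlusN N₁ x v * N₂ x ^ 2 ∧
    rhoMinusN N₂ x v * N₁ x ^ 2 = rhoMinusN N₁ x v * N₂ x ^ 2 := by
  have hc₁ : 0 < N₁ x ^ 2 := pow_pos (norm_pos h₁ hx) 2
  have hc₂ : 0 < N₂ x ^ 2 := pow_pos (norm_pos h₂ hx) 2
  have hab₁ : rhoMinusN N₁ x v ≤ rhoPlusN N₁ x v := rhoMinus_le_rhoPlus h₁ x v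
  have hab₂ : rhoMinusN N₂ x v ≤ rhoPlusN N₂ x v := rhoMinus_le_rhoPlus h₂ x v
  have key : ∀ s : ℝ,
      (rhoMinusN N₁ x v + s * N₁ x ^ 2 ≤ 0 ∧ 0 ≤ rhoPlusN N₁ x v + s * N₁ x ^ 2) ↔
      (rhoMinusN N₂ x v + s * N₂ x ^ 2 ≤ 0 ∧ 0 ≤ rhoPlusN N₂ x v + s * N₂ x ^ 2) := by
    intro s
    have hm := Set.ext_iff.mp (hbj x) (v + s • x)
    simp only [mem_setOf_eq] at hm
    rw [bj_iff h₁, bj_iff h₂, rhoPlus_translate h₁ x v s, rhoMinus_translate h₁ x v s,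
      rhoPlus_translate h₂ x v s, rhoMinus_translate h₂ x v s] at hm
    exact hm
  obtain ⟨k1, k2⟩ := endpoint_le hc₁ hab₁ (fun s => (key s).mp)
  obtain ⟨k3, k4⟩ := endpoint_le hc₂ hab₂ (fun s => (key s).mpr)
  constructor <;> linarith


lemma cont_line (h : IsNorm N) (u v : X) : Continuous fun t : ℝ => N (u + t • v) := by
  have hlip : LipschitzWith (Real.toNNReal (N v)) (fun t : ℝ => N (u + t • v)) := by
    apply LipschitzWith.of_dist_le_mul
    intro a b
    rw [Real.dist_eq, Real.dist_eq]
    have e1 : u + a • v = (u + b • v) + (a - b) • v := by module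
    have e2 : u + b • v = (u + a • v) + (b - a) • v := by module
    have t1 : N (u + a • v) ≤ N (u + b • v) + |a - b| * N v := by
      rw [e1]; have := h.2.2 (u + b • v) ((a - b) • v); rwa [h.2.1] at this
    have t2 : N (u + b • v) ≤ N (u + a • v) + |a - b| * N v := by
      rw [e2]; have := h.2.2 (u + a • v) ((b - a) • v)
      rwa [h.2.1, abs_sub_comm b a] at this
    rw [Real.coe_toNNReal _ (h.nonneg v), abs_le]
    constructor <;> nlinarith [abs_nonneg (a - b), h.nonneg v]
  exact hlip.continuous

lemma hasDerivWithinAt_line (h : IsNorm N) (u v : X) (t : ℝ) :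
    HasDerivWithinAt (fun t : ℝ => N (u + t • v) ^ 2)
      (2 * rhoPlusN N (u + t • v) v) (Ici t) t := by
  rw [hasDerivWithinAt_iff_tendsto_slope, Ici_sdiff_left]
  have hmap : Tendsto (fun w : ℝ => w - t) (𝓝[>] t) (𝓝[>] 0) := by
    rw [tendsto_nhdsWithin_iff]
    constructor
    · have hc : Continuous (fun w : ℝ => w - t) := by fun_prop
      have h0 := (hc.tendsto t).mono_left (nhdsWithin_le_nhds (s := Ioi t))
      simpa using h0
    · filter_upwards [self_mem_nhdsWithin] with w hw
      exact sub_pos.mpr (mem_Ioi.mp hw)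
  have hcomp := ((tendsto_rhoPlus h (u + t • v) v).comp hmap).const_mul 2
  refine hcomp.congr' ?_
  filter_upwards [self_mem_nhdsWithin] with w hw
  have hwt : w - t ≠ 0 := sub_ne_zero.mpr (ne_of_gt hw)
  have e1 : u + t • v + (w - t) • v = u + w • v := by module
  show 2 * qfun N (u + t • v) v (w - t) = slope (fun t : ℝ => N (u + t • v) ^ 2) t w
  rw [slope_def_field]
  unfold qfun
  rw [e1]
  field_simp

/-- The key line lemma: the ratio of the two norms is constant along lines avoiding 0. -/
lemma line_const {N₁ N₂ : X → ℝ} (h₁ : IsNorm N₁) (h₂ : IsNorm N₂)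
    (hratio : ∀ x : X, x ≠ 0 → ∀ v : X,
      rhoPlusN N₂ x v * N₁ x ^ 2 = rhoPlusN N₁ x v * N₂ x ^ 2)
    (u v : X) (hne : ∀ t : ℝ, u + t • v ≠ 0) (t : ℝ) :
    N₂ (u + t • v) * N₁ u = N₂ u * N₁ (u + t • v) := by
  set f₁ : ℝ → ℝ := fun t => N₁ (u + t • v) ^ 2 with hf₁
  set f₂ : ℝ → ℝ := fun t => N₂ (u + t • v) ^ 2 with hf₂
  have hpos₁ : ∀ s : ℝ, 0 < f₁ s := fun s => pow_pos (norm_pos h₁ (hne s)) 2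
  have hpos₂ : ∀ s : ℝ, 0 < f₂ s := fun s => pow_pos (norm_pos h₂ (hne s)) 2
  set φ : ℝ → ℝ := fun t => Real.log (f₂ t) - Real.log (f₁ t) with hφ
  have hlog : ∀ s : ℝ, HasDerivWithinAt φ 0 (Ici s) s := by
    intro s
    have l₁ := (hasDerivWithinAt_line h₁ u v s).log (ne_of_gt (hpos₁ s))
    have l₂ := (hasDerivWithinAt_line h₂ u v s).log (ne_of_gt (hpos₂ s))
    have hsub := l₂.sub l₁
    refine hsub.congr_deriv (Eq.symm ?_)
    have hr := hratio (u + s • v) (hne s) v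
    rw [eq_comm, sub_eq_zero, div_eq_div_iff (ne_of_gt (hpos₂ s)) (ne_of_gt (hpos₁ s))]
    show 2 * rhoPlusN N₂ (u + s • v) v * (N₁ (u + s • v) ^ 2)
      = 2 * rhoPlusN N₁ (u + s • v) v * (N₂ (u + s • v) ^ 2)
    linarith
  have hcont : Continuous φ := by
    have c₁ : Continuous f₁ := (cont_line h₁ u v).pow 2
    have c₂ : Continuous f₂ := (cont_line h₂ u v).pow 2
    exact (c₂.log fun s => (hpos₂ s).ne').sub (c₁.log fun s => (hpos₁ s).ne')
  have hconst : φ t = φ 0 := by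
    rcases le_total 0 t with h0 | h0
    · exact constant_of_has_deriv_right_zero (hcont.continuousOn)
        (fun s _ => hlog s) t ⟨h0, le_refl t⟩
    · exact (constant_of_has_deriv_right_zero (hcont.continuousOn)
        (fun s _ => hlog s) 0 ⟨h0, le_refl (0:ℝ)⟩).symm
  have hlogeq : Real.log (f₂ t * f₁ 0) = Real.log (f₂ 0 * f₁ t) := by
    rw [Real.log_mul (hpos₂ t).ne' (hpos₁ 0).ne', Real.log_mul (hpos₂ 0).ne' (hpos₁ t).ne']
    simp only [hφ] at hconst
    linarith
  have hfe : f₂ t * f₁ 0 = f₂ 0 * f₁ t := by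
    have := congrArg Real.exp hlogeq
    rwa [Real.exp_log (mul_pos (hpos₂ t) (hpos₁ 0)), Real.exp_log (mul_pos (hpos₂ 0) (hpos₁ t))] at this
  have hsq : (N₂ (u + t • v) * N₁ u) ^ 2 = (N₂ u * N₁ (u + t • v)) ^ 2 := by
    rw [mul_pow, mul_pow]
    have e0 : u + (0:ℝ) • v = u := by module
    simp only [hf₁, hf₂, e0] at hfe
    exact hfe
  exact (sq_eq_sq₀ (mul_nonneg (h₂.nonneg _) (h₁.nonneg _))
    (mul_nonneg (h₂.nonneg _) (h₁.nonneg _))).mp hsq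

/-- Scaling of the ρ functionals under norm scaling. -/
lemma rho_scale {N₁ N₂ : X → ℝ} (h₁ : IsNorm N₁) {M : ℝ}
    (hMx : ∀ z : X, N₂ z = M * N₁ z) (x y : X) :
    rhoPlusN N₂ x y = M ^ 2 * rhoPlusN N₁ x y ∧
    rhoMinusN N₂ x y = M ^ 2 * rhoMinusN N₁ x y := by
  have hq : ∀ t : ℝ, M ^ 2 * qfun N₁ x y t = qfun N₂ x y t := by
    intro t; simp only [qfun, hMx]; ring
  constructor
  · rw [rhoPlusN_def]
    exact (((tendsto_rhoPlus h₁ x y).const_mul (M ^ 2)).congr hq).limUnder_eq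
  · rw [rhoMinusN_def]
    exact (((tendsto_rhoMinus h₁ x y).const_mul (M ^ 2)).congr hq).limUnder_eq


end Aux

theorem orthogonality_sets_tfae {X : Type*} [AddCommGroup X] [Module ℝ X]
    (hdim : 2 ≤ Module.rank ℝ X) (N₁ N₂ : X → ℝ) (h₁ : IsNorm N₁) (h₂ : IsNorm N₂) :
    List.TFAE
      [ ∀ x : X, {y : X | rhoStarN N₁ x y = 0} = {y : X | rhoStarN N₂ x y = 0},
        ∀ x : X, {y : X | ∀ lam : ℝ, N₁ x ≤ N₁ (x + lam • y)} =
                 {y : X | ∀ lam : ℝ, N₂ x ≤ N₂ (x + lam • y)},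
        ∃ M : ℝ, 0 < M ∧ ∀ x : X, N₂ x = M * N₁ x ] := by
  tfae_have 1 → 2
  | hstar => by
    intro x
    ext y
    simp only [mem_setOf_eq]
    by_cases hx : x = 0
    · subst hx
      exact iff_of_true (fun lam => by rw [h₁.zero]; exact h₁.nonneg _)
        (fun lam => by rw [h₂.zero]; exact h₂.nonneg _)
    · rw [bj_iff h₁, bj_iff h₂, bj_via_star h₁ hx, bj_via_star h₂ hx]
      have hsx : ∀ z : X, rhoStarN N₁ x z = 0 ↔ rhoStarN N₂ x z = 0 := fun z =>
        Set.ext_iff.mp (hstar x) z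
      constructor
      · rintro ⟨⟨t1, ht1, he1⟩, ⟨t2, ht2, he2⟩⟩
        exact ⟨⟨t1, ht1, (hsx _).mp he1⟩, ⟨t2, ht2, (hsx _).mp he2⟩⟩
      · rintro ⟨⟨t1, ht1, he1⟩, ⟨t2, ht2, he2⟩⟩
        exact ⟨⟨t1, ht1, (hsx _).mpr he1⟩, ⟨t2, ht2, (hsx _).mpr he2⟩⟩
  tfae_have 2 → 3
  | hbj => by
    have hnt : Nontrivial X := by
      rw [← rank_pos_iff_nontrivial (R := ℝ)]
      calc (0 : Cardinal) < 2 := zero_lt_two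
        _ ≤ Module.rank ℝ X := hdim
    obtain ⟨x₀, hx₀⟩ := exists_ne (0 : X)
    have hM : 0 < N₂ x₀ / N₁ x₀ := div_pos (norm_pos h₂ hx₀) (norm_pos h₁ hx₀)
    refine ⟨N₂ x₀ / N₁ x₀, hM, ?_⟩
    have hratio : ∀ x : X, x ≠ 0 → ∀ v : X,
        rhoPlusN N₂ x v * N₁ x ^ 2 = rhoPlusN N₁ x v * N₂ x ^ 2 :=
      fun x hx v => (ratio_eq h₁ h₂ hbj hx v).1
    intro x
    by_cases hdep : ∃ c : ℝ, x = c • x₀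
    · rcases hdep with ⟨c, rfl⟩
      rw [h₁.2.1, h₂.2.1, div_mul_eq_mul_div, eq_div_iff (norm_pos h₁ hx₀).ne']
      ring
    · push_neg at hdep
      have hne : ∀ t : ℝ, x₀ + t • (x - x₀) ≠ 0 := by
        intro t hc
        by_cases ht : t = 0
        · subst ht; simp only [zero_smul, add_zero] at hc; exact hx₀ hc
        · refine hdep (t⁻¹ * (t - 1)) ?_
          have h1 : t • x = (t - 1) • x₀ := by
            have e : x₀ + t • (x - x₀) = t • x + (1 - t) • x₀ := by module
            rw [e] at hc
            have := eq_neg_of_add_eq_zero_left hc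
            rw [this]; module
          rw [← smul_smul, ← h1, smul_smul, inv_mul_cancel₀ ht, one_smul]
      have hline := line_const h₁ h₂ hratio x₀ (x - x₀) hne 1
      rw [one_smul, show x₀ + (x - x₀) = x by abel] at hline
      rw [div_mul_eq_mul_div, eq_div_iff (norm_pos h₁ hx₀).ne']
      linarith
  tfae_have 3 → 1
  | ⟨M, hM, hMx⟩ => by
    intro x
    ext y
    simp only [mem_setOf_eq, rhoStarN]
    obtain ⟨hp, hm⟩ := rho_scale h₁ hMx x y
    rw [hp, hm]
    have hM4 : (M : ℝ) ^ 2 * M ^ 2 ≠ 0 := by positivity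
    constructor
    · intro h0
      rw [show M ^ 2 * rhoMinusN N₁ x y * (M ^ 2 * rhoPlusN N₁ x y)
          = M ^ 2 * M ^ 2 * (rhoMinusN N₁ x y * rhoPlusN N₁ x y) by ring, h0, mul_zero]
    · intro h0
      rw [show M ^ 2 * rhoMinusN N₁ x y * (M ^ 2 * rhoPlusN N₁ x y)
          = M ^ 2 * M ^ 2 * (rhoMinusN N₁ x y * rhoPlusN N₁ x y) by ring] at h0
      exact (mul_eq_zero.mp h0).resolve_left hM4
  tfae_finish
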